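/- For all positive integers n and k, f_k(n) = ∑_{d=1}^{n} μ(d)·C(⌊n/d⌋, k), where μ is the Möbius function and C denotes the binomial coefficient. -/
import Mathlib

open Finset

/-- `fk n k` is the number of relatively prime subsets of `{1,2,...,n}` of
cardinality `k`, i.e. subsets `A` of `{1,...,n}` with `|A| = k` and `gcd(A) = 1`. -/
def fk (n k : ℕ) : ℕ :=
  ((Finset.Icc 1 n).powerset.filter (fun A => A.card = k ∧ A.gcd id = 1)).card

lemma card_multiples_subsets (n k d : ℕ) (hd : 0 < d) :
    (((Finset.Icc 1 n).powerset.filter (fun A => A.card = k)).filter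
      (fun A => ∀ a ∈ A, d ∣ a)).card = (n / d).choose k := by
  have hcard : ((Finset.Icc 1 (n / d)).powersetCard k).card = (n / d).choose k := by
    rw [Finset.card_powersetCard, Nat.card_Icc]; norm_num
  rw [← hcard]
  refine Finset.card_bij' (fun A _ => A.image (· / d)) (fun B _ => B.image (· * d)) ?hi ?hj ?li ?ri
  case hi =>
    intro A hA
    simp only [Finset.mem_filter, Finset.mem_powerset, Finset.mem_powersetCard] at hA ⊢
    obtain ⟨⟨hsub, hcardA⟩, hdvd⟩ := hA
    constructor
    · intro x hx
      simp only [Finset.mem_image] at hx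
      obtain ⟨a, ha, rfl⟩ := hx
      have h1 := hsub ha
      simp only [Finset.mem_Icc] at h1 ⊢
      have hda := hdvd a ha
      constructor
      · have : d ≤ a := Nat.le_of_dvd (by omega) hda
        exact Nat.one_le_div_iff hd |>.2 this
      · exact Nat.div_le_div_right h1.2
    · rw [Finset.card_image_of_injOn, hcardA]
      intro a ha b hb hab
      have hab' : a / d = b / d := hab
      have : a / d * d = b / d * d := by rw [hab']
      rwa [Nat.div_mul_cancel (hdvd a ha), Nat.div_mul_cancel (hdvd b hb)] at this
  case hj =>
    intro B hB
    simp only [Finset.mem_filter, Finset.mem_powerset, Finset.mem_powersetCard] at hB ⊢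
    obtain ⟨hsub, hcardB⟩ := hB
    refine ⟨⟨?_, ?_⟩, ?_⟩
    · intro x hx
      simp only [Finset.mem_image] at hx
      obtain ⟨b, hb, rfl⟩ := hx
      have h1 := hsub hb
      simp only [Finset.mem_Icc] at h1 ⊢
      constructor
      · exact Nat.mul_pos h1.1 hd
      · calc b * d ≤ n / d * d := Nat.mul_le_mul_right d h1.2
          _ ≤ n := Nat.div_mul_le_self n d
    · rw [Finset.card_image_of_injOn, hcardB]
      intro a _ b _ hab
      exact Nat.eq_of_mul_eq_mul_right hd hab
    · intro x hx
      simp only [Finset.mem_image] at hx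
      obtain ⟨b, _, rfl⟩ := hx
      exact dvd_mul_left d b
  case li =>
    intro A hA
    simp only [Finset.mem_filter] at hA
    show Finset.image (· * d) (Finset.image (· / d) A) = A
    rw [Finset.image_image]
    conv_rhs => rw [← Finset.image_id (s := A)]
    apply Finset.image_congr
    intro a ha
    exact Nat.div_mul_cancel (hA.2 a ha)
  case ri =>
    intro B hB
    show Finset.image (· / d) (Finset.image (· * d) B) = B
    rw [Finset.image_image]
    conv_rhs => rw [← Finset.image_id (s := B)]
    apply Finset.image_congr
    intro b hb
    exact Nat.mul_div_cancel b hd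

theorem fk_eq_sum_moebius (n k : ℕ) (hn : 0 < n) (hk : 0 < k) :
    (fk n k : ℤ) = ∑ d ∈ Finset.Icc 1 n,
      ArithmeticFunction.moebius d * ((n / d).choose k : ℤ) := by
  set T := (Finset.Icc 1 n).powerset.filter (fun A => A.card = k) with hT
  have key : ∀ d ∈ Finset.Icc 1 n,
      (ArithmeticFunction.moebius d : ℤ) * ((n / d).choose k : ℤ)
      = ∑ A ∈ T, ArithmeticFunction.moebius d * (if ∀ a ∈ A, d ∣ a then 1 else 0) := by
    intro d hd
    simp only [Finset.mem_Icc] at hd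
    rw [← Finset.mul_sum, ← card_multiples_subsets n k d hd.1]
    congr 1
    rw [Finset.card_filter]
    push_cast
    rfl
  rw [Finset.sum_congr rfl key, Finset.sum_comm]
  have step : ∀ A ∈ T, ∑ d ∈ Finset.Icc 1 n,
      (ArithmeticFunction.moebius d : ℤ) * (if ∀ a ∈ A, d ∣ a then 1 else 0)
      = (if A.gcd id = 1 then 1 else 0) := by
    intro A hA
    simp only [hT, Finset.mem_filter, Finset.mem_powerset] at hA
    obtain ⟨hsub, hcard⟩ := hA
    set m := A.gcd id with hm
    have hAne : A.Nonempty := Finset.card_pos.1 (hcard ▸ hk)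
    obtain ⟨a, ha⟩ := hAne
    have ha' := hsub ha
    simp only [Finset.mem_Icc] at ha'
    have hma : m ∣ a := Finset.gcd_dvd ha
    have hm0 : 0 < m := Nat.pos_of_dvd_of_pos hma (by omega)
    have hmn : m ≤ n := le_trans (Nat.le_of_dvd (by omega) hma) ha'.2
    have hiff : ∀ d, (∀ a ∈ A, d ∣ a) ↔ d ∣ m := by
      intro d
      rw [hm, Finset.dvd_gcd_iff]
      simp
    have : ∑ d ∈ Finset.Icc 1 n,
        (ArithmeticFunction.moebius d : ℤ) * (if ∀ a ∈ A, d ∣ a then 1 else 0)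
        = ∑ d ∈ (Finset.Icc 1 n).filter (· ∣ m), (ArithmeticFunction.moebius d : ℤ) := by
      rw [Finset.sum_filter]
      refine Finset.sum_congr rfl fun d _ => ?_
      simp [hiff d, mul_ite]
    rw [this]
    have hset : (Finset.Icc 1 n).filter (· ∣ m) = m.divisors := by
      ext d
      simp only [Finset.mem_filter, Finset.mem_Icc, Nat.mem_divisors]
      constructor
      · rintro ⟨_, hdm⟩; exact ⟨hdm, by omega⟩
      · rintro ⟨hdm, _⟩
        have hd1 : 0 < d := Nat.pos_of_dvd_of_pos hdm hm0
        exact ⟨⟨hd1, le_trans (Nat.le_of_dvd hm0 hdm) hmn⟩, hdm⟩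
    rw [hset]
    have h1 : ∑ d ∈ m.divisors, (ArithmeticFunction.moebius d : ℤ)
        = (ArithmeticFunction.moebius * ArithmeticFunction.zeta :
            ArithmeticFunction ℤ) m := by
      rw [ArithmeticFunction.coe_mul_zeta_apply]
    rw [h1, ArithmeticFunction.moebius_mul_coe_zeta, ArithmeticFunction.one_apply]
  rw [Finset.sum_congr rfl step, ← Finset.sum_filter, Finset.filter_filter] at *
  unfold fk
  rw [Finset.card_eq_sum_ones]
  push_cast
  rfl
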